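/- arXiv:1406.5468 — 2 statements merged into one kernel-verified Lean document; each statement's English description precedes it below -/
import Mathlib

section
/- Fix N ≥ 1 and let θ_0,...,θ_N be the OGM sequence. Define λ_i = 2θ_{i-1}^2/θ_N^2 for i = 1,...,N and τ_i = 2θ_i/θ_N^2 for i = 0,...,N-1 and τ_N = 1/θ_N. Then (λ, τ) satisfies: τ_0 = λ_1, λ_N + τ_N = 1, and λ_i - λ_{i+1} + τ_i = 0 for i = 1,...,N-1. -/
noncomputable def tseq : ℕ → ℝ
  | 0 => 1
  | i + 1 => (1 + Real.sqrt (1 + 4 * (tseq i) ^ 2)) / 2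

noncomputable def θseq (N i : ℕ) : ℝ :=
  if i < N then tseq i else (1 + Real.sqrt (1 + 8 * (tseq (N - 1)) ^ 2)) / 2

lemma tseq_pos (i : ℕ) : 0 < tseq i := by
  cases i with
  | zero => norm_num [tseq]
  | succ n =>
    have := Real.sqrt_nonneg (1 + 4 * (tseq n) ^ 2)
    simp only [tseq]
    linarith

lemma tseq_rec (i : ℕ) : tseq (i + 1) ^ 2 - tseq (i + 1) = tseq i ^ 2 := by
  have h : (0:ℝ) ≤ 1 + 4 * (tseq i) ^ 2 := by positivity
  have hs := Real.sq_sqrt h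
  simp only [tseq]
  nlinarith [hs]

lemma θN_pos (N : ℕ) : 0 < θseq N N := by
  have := Real.sqrt_nonneg (1 + 8 * (tseq (N - 1)) ^ 2)
  simp only [θseq, lt_irrefl, if_false]
  linarith

lemma θN_rec (N : ℕ) : θseq N N ^ 2 - θseq N N = 2 * tseq (N - 1) ^ 2 := by
  have h : (0:ℝ) ≤ 1 + 8 * (tseq (N-1)) ^ 2 := by positivity
  have hs := Real.sq_sqrt h
  simp only [θseq, lt_irrefl, if_false]
  nlinarith [hs]

/-- The OGM dual variables `(λ, τ)` lie in the dual feasible set `Λ`. -/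
theorem stmt_11 (N : ℕ) (hN : 1 ≤ N)
    (lam : ℕ → ℝ) (hlam : ∀ i, lam i = 2 * (θseq N (i - 1)) ^ 2 / (θseq N N) ^ 2)
    (tau : ℕ → ℝ)
    (htau : ∀ i, tau i = if i < N then 2 * θseq N i / (θseq N N) ^ 2 else 1 / θseq N N) :
    tau 0 = lam 1 ∧ lam N + tau N = 1 ∧
    ∀ i, 1 ≤ i → i < N → lam i - lam (i + 1) + tau i = 0 := by
  have hθ := θN_pos N
  have hθne : θseq N N ≠ 0 := ne_of_gt hθ
  refine ⟨?_, ?_, ?_⟩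
  · rw [htau 0, hlam 1, if_pos (by omega : 0 < N)]
    have h0 : θseq N 0 = 1 := by
      rw [θseq, if_pos (by omega : 0 < N)]; rfl
    simp [h0]
  · rw [hlam N, htau N, if_neg (lt_irrefl N)]
    have h1 : θseq N (N - 1) = tseq (N - 1) := by
      rw [θseq, if_pos (by omega : N - 1 < N)]
    rw [h1]
    have hr := θN_rec N
    field_simp
    nlinarith [hr, hθ]
  · intro i h1 h2
    rw [hlam i, hlam (i+1), htau i, if_pos h2]
    have e1 : θseq N (i - 1) = tseq (i - 1) := by
      rw [θseq, if_pos (by omega : i - 1 < N)]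
    have e2 : θseq N (i + 1 - 1) = tseq i := by
      rw [θseq]; simp only [Nat.add_sub_cancel]
      rw [if_pos h2]
    have e3 : θseq N i = tseq i := by rw [θseq, if_pos h2]
    rw [e1, e2, e3]
    have hr : tseq i ^ 2 - tseq i = tseq (i - 1) ^ 2 := by
      have := tseq_rec (i - 1)
      have : i - 1 + 1 = i := by omega
      rw [← this]; exact tseq_rec (i - 1)
    field_simp
    nlinarith [hr]
end

section
/- Fix L, R > 0, N ≥ 1, and let θ_0,...,θ_N be the OGM sequence. Let φ be the function φ(x) = (LR/θ_N^2)||x|| - LR^2/(2θ_N^4) for ||x|| ≥ R/θ_N^2 and φ(x) = (L/2)||x||^2 otherwise, minimized at x_* = 0. Starting from x_0 = Rν for a unit vector ν, the OGM1 iterates satisfy x_i = (1 - (θ_i^2 - 1)/θ_N^2) R ν for i = 0,...,N-1 and x_N = (1 - (θ_N^2 - 1)/(2θ_N^2)) R ν, and consequently φ(x_N) - φ(x_*) = L R^2/(2 θ_N^2). -/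
lemma tseq_one_le : ∀ i, 1 ≤ tseq i := by
  intro i
  induction i with
  | zero => simp [tseq]
  | succ n ih =>
    have h : (1:ℝ) ≤ Real.sqrt (1 + 4 * tseq n ^ 2) := by
      have := Real.sqrt_le_sqrt (show (1:ℝ) ≤ 1 + 4 * tseq n ^ 2 by nlinarith)
      rwa [Real.sqrt_one] at this
    simp only [tseq]; linarith

lemma tseq_sq (i : ℕ) : tseq (i+1) ^ 2 = tseq (i+1) + tseq i ^ 2 := by
  have hs : Real.sqrt (1 + 4 * tseq i ^ 2) ^ 2 = 1 + 4 * tseq i ^ 2 :=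
    Real.sq_sqrt (by positivity)
  simp only [tseq]; nlinarith

lemma tseq_mono : Monotone tseq := by
  apply monotone_nat_of_le_succ
  intro n
  have h1 := tseq_one_le n
  have h2 := tseq_one_le (n+1)
  have h3 := tseq_sq n
  nlinarith

lemma theta_sq (N : ℕ) : θseq N N ^ 2 = θseq N N + 2 * tseq (N-1) ^ 2 := by
  have hs : Real.sqrt (1 + 8 * tseq (N-1) ^ 2) ^ 2 = 1 + 8 * tseq (N-1) ^ 2 :=
    Real.sq_sqrt (by positivity)
  simp only [θseq, lt_self_iff_false, if_false]
  nlinarith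

lemma theta_ge_two (N : ℕ) : 2 ≤ θseq N N := by
  have h1 := tseq_one_le (N-1)
  have h : (3:ℝ) ≤ Real.sqrt (1 + 8 * tseq (N-1) ^ 2) := by
    have := Real.sqrt_le_sqrt (show (9:ℝ) ≤ 1 + 8 * tseq (N-1) ^ 2 by nlinarith)
    rwa [show Real.sqrt 9 = 3 by
      rw [show (9:ℝ) = 3^2 by norm_num, Real.sqrt_sq (by norm_num)]] at this
  simp only [θseq, lt_self_iff_false, if_false]
  linarith

lemma tseq_lt_theta (N i : ℕ) (hi : i < N) : tseq i < θseq N N := by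
  have h1 : tseq i ≤ tseq (N-1) := tseq_mono (by omega)
  have h2 := theta_sq N
  have h3 := theta_ge_two N
  have h4 := tseq_one_le (N-1)
  nlinarith

lemma hasGradientAt_norm {d : ℕ} (z : EuclideanSpace ℝ (Fin d)) (hz : z ≠ 0) :
    HasGradientAt (fun w => ‖w‖) (‖z‖⁻¹ • z) z := by
  have hzn : ‖z‖ ≠ 0 := norm_ne_zero_iff.2 hz
  have h1 : HasFDerivAt (fun w : EuclideanSpace ℝ (Fin d) => ‖w‖ ^ 2) (2 • innerSL ℝ z) z :=
    (hasStrictFDerivAt_norm_sq z).hasFDerivAt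
  have h2 : HasDerivAt Real.sqrt (1 / (2 * Real.sqrt (‖z‖ ^ 2))) (‖z‖ ^ 2) :=
    Real.hasDerivAt_sqrt (by positivity)
  have h3 := h2.comp_hasFDerivAt z h1
  have hfun : (Real.sqrt ∘ fun w : EuclideanSpace ℝ (Fin d) => ‖w‖ ^ 2) = fun w => ‖w‖ := by
    funext w; simp [Function.comp, Real.sqrt_sq (norm_nonneg w)]
  rw [hfun] at h3
  rw [hasGradientAt_iff_hasFDerivAt]
  refine h3.congr_fderiv ?_
  ext w
  simp [InnerProductSpace.toDual_apply_apply, real_inner_smul_left, Real.sqrt_sq (norm_nonneg z)]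
  field_simp

/-- Coefficient of the `x` iterates. -/
noncomputable def Cc (N i : ℕ) : ℝ :=
  if i < N then 1 - ((tseq i) ^ 2 - 1) / (θseq N N) ^ 2
  else 1 - ((θseq N N) ^ 2 - 1) / (2 * (θseq N N) ^ 2)

/-- Coefficient of the `y` iterates. -/
noncomputable def Bb (N : ℕ) : ℕ → ℝ
  | 0 => 1
  | i + 1 => Cc N i - 1 / (θseq N N) ^ 2

lemma Cc_gt (N i : ℕ) (hi : i < N) : 1 / (θseq N N) ^ 2 < Cc N i := by
  have h1 := tseq_lt_theta N i hi
  have h2 := tseq_one_le i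
  have h3 := theta_ge_two N
  have hpos : (0:ℝ) < (θseq N N) ^ 2 := by positivity
  have key : Cc N i - 1 / (θseq N N) ^ 2 = ((θseq N N)^2 - tseq i ^ 2) / (θseq N N) ^ 2 := by
    rw [Cc, if_pos hi]; field_simp; ring
  have : (0:ℝ) < ((θseq N N)^2 - tseq i ^ 2) / (θseq N N) ^ 2 :=
    div_pos (by nlinarith) hpos
  linarith

lemma Bdiff (N i : ℕ) (hN : 1 ≤ N) (hi : i + 1 ≤ N) :
    Bb N (i+1) - Bb N i = -(tseq i) / (θseq N N) ^ 2 := by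
  have h3 := theta_ge_two N
  have hΘne : (θseq N N) ≠ 0 := by linarith
  cases i with
  | zero =>
    have h0N : 0 < N := hN
    simp only [Bb, Cc, if_pos h0N, show tseq 0 = 1 from rfl]
    field_simp
    ring
  | succ j =>
    have hj1 : j + 1 < N := by omega
    have hj : j < N := by omega
    have hrec := tseq_sq j
    simp only [Bb, Cc, if_pos hj1, if_pos hj]
    field_simp
    linarith

lemma scalar_step (N i : ℕ) (hN : 1 ≤ N) (hi : i + 1 ≤ N) :
    Bb N (i+1) + ((θseq N i - 1) / θseq N (i+1)) * (Bb N (i+1) - Bb N i)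
      + (θseq N i / θseq N (i+1)) * (Bb N (i+1) - Cc N i) = Cc N (i+1) := by
  have h3 := theta_ge_two N
  have hT : (θseq N N) ≠ 0 := by linarith
  have hiN : i < N := by omega
  have hu : θseq N i = tseq i := if_pos hiN
  have hd := Bdiff N i hN hi
  have hB : Bb N (i+1) - Cc N i = -(1 / (θseq N N) ^ 2) := by
    simp only [Bb]; ring
  have hBval : Bb N (i+1) = Cc N i - 1 / (θseq N N) ^ 2 := rfl
  have hC0 : Cc N i = 1 - (tseq i ^ 2 - 1) / (θseq N N) ^ 2 := if_pos hiN
  rw [hu, hd, hB, hBval, hC0]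
  set T := θseq N N with hTdef
  set t := tseq i with htdef
  by_cases h : i + 1 < N
  · have hv : θseq N (i+1) = tseq (i+1) := if_pos h
    have hC1 : Cc N (i+1) = 1 - (tseq (i+1) ^ 2 - 1) / T ^ 2 := if_pos h
    have hrec := tseq_sq i
    have hs : tseq (i+1) ≠ 0 := by have := tseq_one_le (i+1); linarith
    rw [hv, hC1]
    set s := tseq (i+1) with hsdef
    have ht : t ^ 2 = s ^ 2 - s := by rw [hsdef, htdef]; linarith
    field_simp
    linear_combination (-1 - s) * ht
  · have hiN1 : i + 1 = N := by omega
    have hv : θseq N (i+1) = T := by rw [hiN1]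
    have hC1 : Cc N (i+1) = 1 - (T ^ 2 - 1) / (2 * T ^ 2) := by
      rw [hiN1, Cc, if_neg (lt_irrefl N)]
    have hrec : T ^ 2 = T + 2 * t ^ 2 := by
      rw [htdef, show i = N - 1 by omega]; exact theta_sq N
    rw [hv, hC1]
    have ht : t ^ 2 = (T ^ 2 - T) / 2 := by linarith
    field_simp
    linear_combination (-2*T - 2) * ht

/-- On the worst-case function `φ`, the OGM1 iterates started at `x₀ = R ν` stay in
the affine region and exactly attain the bound `L R² / (2 θ_N²)`. -/
theorem stmt_18 (d N : ℕ) (hN : 1 ≤ N) (L R : ℝ) (hL : 0 < L) (hR : 0 < R)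
    (ν : EuclideanSpace ℝ (Fin d)) (hν : ‖ν‖ = 1)
    (φ : EuclideanSpace ℝ (Fin d) → ℝ)
    (hφ : ∀ z, φ z =
      if R / (θseq N N) ^ 2 ≤ ‖z‖ then
        L * R / (θseq N N) ^ 2 * ‖z‖ - L * R ^ 2 / (2 * (θseq N N) ^ 4)
      else L / 2 * ‖z‖ ^ 2)
    (g : EuclideanSpace ℝ (Fin d) → EuclideanSpace ℝ (Fin d))
    (hg : ∀ z, HasGradientAt φ (g z) z)
    (xstar : EuclideanSpace ℝ (Fin d)) (hstar : xstar = 0)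
    (x y : ℕ → EuclideanSpace ℝ (Fin d))
    (hx0 : x 0 = R • ν) (hy0 : y 0 = x 0)
    (hyrec : ∀ i : ℕ, i + 1 ≤ N → y (i + 1) = x i - (1 / L) • g (x i))
    (hxrec : ∀ i : ℕ, i + 1 ≤ N → x (i + 1) =
      y (i + 1) + ((θseq N i - 1) / θseq N (i + 1)) • (y (i + 1) - y i)
        + (θseq N i / θseq N (i + 1)) • (y (i + 1) - x i)) :
    (∀ i, i < N →
      x i = (1 - ((θseq N i) ^ 2 - 1) / (θseq N N) ^ 2) • (R • ν)) ∧
    x N = (1 - ((θseq N N) ^ 2 - 1) / (2 * (θseq N N) ^ 2)) • (R • ν) ∧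
    φ (x N) - φ xstar = L * R ^ 2 / (2 * (θseq N N) ^ 2) := by
  have hΘ2 := theta_ge_two N
  set T := θseq N N with hTdef
  have hTpos : (0:ℝ) < T := by linarith
  have hT2pos : (0:ℝ) < T ^ 2 := by positivity
  -- gradient of φ in the affine region
  have key : ∀ z : EuclideanSpace ℝ (Fin d), R / T ^ 2 < ‖z‖ →
      g z = ((L * R / T ^ 2) * ‖z‖⁻¹) • z := by
    intro z hzgt
    have hRT : (0:ℝ) < R / T ^ 2 := by positivity
    have hz : z ≠ 0 := by
      intro h; rw [h, norm_zero] at hzgt; linarith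
    have hgrad : HasGradientAt
        (fun w : EuclideanSpace ℝ (Fin d) => L * R / T ^ 2 * ‖w‖ - L * R ^ 2 / (2 * T ^ 4))
        (((L * R / T ^ 2) * ‖z‖⁻¹) • z) z := by
      have h := (hasGradientAt_norm z hz).hasFDerivAt
      have h2 := (h.const_mul (L * R / T ^ 2)).sub_const (L * R ^ 2 / (2 * T ^ 4))
      rw [hasGradientAt_iff_hasFDerivAt]
      refine h2.congr_fderiv ?_
      rw [mul_smul, map_smul, map_smul, map_smul]
    have hev : φ =ᶠ[nhds z]
        (fun w : EuclideanSpace ℝ (Fin d) => L * R / T ^ 2 * ‖w‖ - L * R ^ 2 / (2 * T ^ 4)) := by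
      filter_upwards [IsOpen.mem_nhds
        (isOpen_lt continuous_const continuous_norm) hzgt] with w hw
      rw [hφ w, if_pos (le_of_lt hw)]
    exact (hg z).unique (hgrad.congr_of_eventuallyEq hev)
  -- value of the gradient at points of the form c • (R • ν)
  have gval : ∀ c : ℝ, 1 / T ^ 2 < c → g (c • (R • ν)) = (L * R / T ^ 2) • ν := by
    intro c hc
    have hcpos : 0 < c := lt_trans (by positivity) hc
    have hnorm : ‖c • (R • ν)‖ = c * R := by
      rw [norm_smul, norm_smul, hν, mul_one, Real.norm_eq_abs, Real.norm_eq_abs,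
        abs_of_pos hcpos, abs_of_pos hR]
    have hregion : R / T ^ 2 < ‖c • (R • ν)‖ := by
      rw [hnorm]
      rw [div_lt_iff₀ hT2pos] at hc ⊢
      · nlinarith
    rw [key _ hregion, hnorm, smul_smul, smul_smul]
    congr 1
    field_simp
  -- main induction
  have main : ∀ i, i ≤ N → x i = Cc N i • (R • ν) ∧ y i = Bb N i • (R • ν) := by
    intro i
    induction i with
    | zero =>
      intro _
      have hC0 : Cc N 0 = 1 := by
        rw [Cc, if_pos (show 0 < N by omega), show tseq 0 = 1 from rfl]
        simp
      constructor
      · rw [hx0, hC0, one_smul]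
      · rw [hy0, hx0, show Bb N 0 = 1 from rfl, one_smul]
    | succ i ih =>
      intro hi1
      obtain ⟨hxi, hyi⟩ := ih (by omega)
      have hiN : i < N := by omega
      have hLne : L ≠ 0 := ne_of_gt hL
      have hTne : T ≠ 0 := ne_of_gt hTpos
      have hy1 : y (i+1) = Bb N (i+1) • (R • ν) := by
        rw [hyrec i hi1, hxi, gval _ (Cc_gt N i hiN),
          show Bb N (i+1) = Cc N i - 1 / T ^ 2 from rfl]
        match_scalars
        field_simp
      refine ⟨?_, hy1⟩
      rw [hxrec i hi1, hy1, hyi, hxi, ← scalar_step N i hN hi1]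
      module
  obtain ⟨hxN, -⟩ := main N le_rfl
  have hCN : Cc N N = 1 - (T ^ 2 - 1) / (2 * T ^ 2) := by
    rw [Cc, if_neg (lt_irrefl N)]
  have hCNval : Cc N N = (T ^ 2 + 1) / (2 * T ^ 2) := by
    rw [hCN]; field_simp; ring
  refine ⟨?_, ?_, ?_⟩
  · intro i hi
    have := (main i hi.le).1
    rwa [show Cc N i = 1 - ((θseq N i) ^ 2 - 1) / T ^ 2 by
      rw [Cc, if_pos hi, show θseq N i = tseq i from if_pos hi]] at this
  · rw [hxN, hCN]
  · have hCpos : 0 < Cc N N := by rw [hCNval]; positivity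
    have hnormN : ‖x N‖ = Cc N N * R := by
      rw [hxN, norm_smul, norm_smul, hν, mul_one, Real.norm_eq_abs, Real.norm_eq_abs,
        abs_of_pos hCpos, abs_of_pos hR]
    have hcond : R / T ^ 2 ≤ ‖x N‖ := by
      rw [hnormN, hCNval, div_le_iff₀ hT2pos]
      have e : (T ^ 2 + 1) / (2 * T ^ 2) * R * T ^ 2 = (T ^ 2 + 1) * R / 2 := by
        field_simp
      rw [e]
      nlinarith [mul_nonneg hR.le (show (0:ℝ) ≤ T ^ 2 - 1 by nlinarith)]
    have hφ0 : φ xstar = 0 := by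
      rw [hstar, hφ 0, norm_zero, if_neg (by push_neg; positivity)]
      simp
    rw [hφ (x N), if_pos hcond, hnormN, hCNval, hφ0]
    field_simp
    ring
end
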